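/- Let p be a prime, q = p^ν (ν ≥ 1) a power of p, and k an algebraically closed field of characteristic p. Then the linear transformation of P^2 given by [u : v : w] ↦ [u : v : (−1)^{q+1}w − u − v] maps the Ballico–Hefez curve B = γ_{q+1}(l_0), the image of the line l_0 : x_0+x_1+x_2 = 0 under γ_{q+1}, bijectively onto the image of the morphism P^1 → P^2, [s : t] ↦ [s^{q+1} : t^{q+1} : s t^q + s^q t]. In particular the image of [s:t] ↦ [s^{q+1} : t^{q+1} : st^q + s^q t] is projectively isomorphic to γ_{q+1}(l_0); the key identity is that for all y_0, y_1 ∈ k, setting y_2 = −(y_0+y_1), one has (−1)^{q+1} y_2^{q+1} − y_0^{q+1} − y_1^{q+1} = y_0 y_1^q + y_0^q y_1. -/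

import Mathlib

/-- Over an algebraically closed field `k` of characteristic `p`, with `q` a power of
`p`: the linear transformation `[u:v:w] ↦ [u : v : (−1)^{q+1}w − u − v]` of `ℙ²` is
bijective and maps the Ballico–Hefez curve `B = γ_{q+1}(l₀)` (the image of the line
`l₀ : x₀+x₁+x₂ = 0` under `γ_{q+1}`) onto the image of `ℙ¹ → ℙ²`,
`[s:t] ↦ [s^{q+1} : t^{q+1} : st^q + s^q t]`; the key identity is that for `y₂ = −(y₀+y₁)`
one has `(−1)^{q+1} y₂^{q+1} − y₀^{q+1} − y₁^{q+1} = y₀ y₁^q + y₀^q y₁`.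
(The image sets are stated on nonzero coefficient vectors modulo scaling.) -/
theorem ballico_hefez_projectively_isomorphic_to_standard_form
    {k : Type*} [Field k] [IsAlgClosed k] (p ν q : ℕ) (hp : p.Prime) [CharP k p]
    (hν : 1 ≤ ν) (hq : q = p ^ ν) :
    (∀ y₀ y₁ : k,
        (-1 : k) ^ (q + 1) * (-(y₀ + y₁)) ^ (q + 1) - y₀ ^ (q + 1) - y₁ ^ (q + 1) =
          y₀ * y₁ ^ q + y₀ ^ q * y₁) ∧
    Function.Bijective
      (fun z : Fin 3 → k => ![z 0, z 1, (-1 : k) ^ (q + 1) * z 2 - z 0 - z 1]) ∧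
    { z : Fin 3 → k | z ≠ 0 ∧ ∃ (y : Fin 3 → k) (lam : k), lam ≠ 0 ∧ y ≠ 0 ∧
        y 0 + y 1 + y 2 = 0 ∧ z 0 = lam * y 0 ^ (q + 1) ∧ z 1 = lam * y 1 ^ (q + 1) ∧
        z 2 = lam * ((-1 : k) ^ (q + 1) * y 2 ^ (q + 1) - y 0 ^ (q + 1) - y 1 ^ (q + 1)) } =
      { z : Fin 3 → k | z ≠ 0 ∧ ∃ s t lam : k, lam ≠ 0 ∧ ¬ (s = 0 ∧ t = 0) ∧
        z 0 = lam * s ^ (q + 1) ∧ z 1 = lam * t ^ (q + 1) ∧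
        z 2 = lam * (s * t ^ q + s ^ q * t) } := by
  haveI := Fact.mk hp
  have hfr : ∀ a b : k, (a + b) ^ q = a ^ q + b ^ q := by
    subst hq
    exact fun a b => add_pow_char_pow (R := k) a b p ν
  have he : ((-1 : k) ^ (q + 1)) * ((-1 : k) ^ (q + 1)) = 1 := by
    rw [← mul_pow]; norm_num
  have key : ∀ y₀ y₁ : k,
      (-1 : k) ^ (q + 1) * (-(y₀ + y₁)) ^ (q + 1) - y₀ ^ (q + 1) - y₁ ^ (q + 1) =
        y₀ * y₁ ^ q + y₀ ^ q * y₁ := by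
    intro y₀ y₁
    have h1 : (-(y₀ + y₁)) ^ (q + 1) = (-1 : k) ^ (q + 1) * (y₀ + y₁) ^ (q + 1) := by
      rw [neg_pow]
    rw [h1, ← mul_assoc, he, one_mul, pow_succ, pow_succ, pow_succ, hfr]
    ring
  refine ⟨key, ?_, ?_⟩
  · apply Function.bijective_iff_has_inverse.2
    refine ⟨fun w => ![w 0, w 1, (-1 : k) ^ (q + 1) * w 2 + (-1 : k) ^ (q + 1) * w 0
      + (-1 : k) ^ (q + 1) * w 1], ?_, ?_⟩
    · intro z
      funext i
      fin_cases i <;>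
        simp [Matrix.cons_val_zero, Matrix.cons_val_one, Matrix.head_cons] <;>
        linear_combination (z 2) * he
    · intro w
      funext i
      fin_cases i <;>
        simp [Matrix.cons_val_zero, Matrix.cons_val_one, Matrix.head_cons] <;>
        linear_combination (w 2 + w 0 + w 1) * he
  · ext z
    simp only [Set.mem_setOf_eq]
    constructor
    · rintro ⟨hz, y, lam, hlam, hy, hsum, h0, h1, h2⟩
      have hy2 : y 2 = -(y 0 + y 1) := by linear_combination hsum
      refine ⟨hz, y 0, y 1, lam, hlam, ?_, h0, h1, ?_⟩
      · rintro ⟨e0, e1⟩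
        apply hy
        funext i
        fin_cases i
        · exact e0
        · exact e1
        · simpa [e0, e1] using hy2
      · rw [h2, hy2, key]
    · rintro ⟨hz, s, t, lam, hlam, hst, h0, h1, h2⟩
      refine ⟨hz, ![s, t, -(s + t)], lam, hlam, ?_, by simp, by simpa using h0,
        by simpa using h1, ?_⟩
      · intro h
        apply hst
        constructor
        · simpa using congrFun h 0
        · simpa using congrFun h 1
      · simp only [Matrix.cons_val_zero, Matrix.cons_val_one, Matrix.head_cons]
        rw [h2, show (![s, t, -(s+t)] : Fin 3 → k) 2 = -(s+t) by rfl, key]
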